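/- Let m ≥ 1, N ≥ 1, t ≥ 1, and G = 2^t. Let g : {0, …, N−1} → {0, …, G−1} be any function (assigning to each index k the piece it belongs to). For each j ∈ {0, …, G−1}, let V_j be a unitary on ℂ^{2^m} ⊗ ℂ^N whose compression is a diagonal matrix: (⟨0|^{⊗m} ⊗ I_N)·V_j·(|0⟩^{⊗m} ⊗ I_N) = diag(d_{j,0}, …, d_{j,N−1}) with d_{j,k} ∈ ℂ. Define on ℂ^G ⊗ ℂ^{2^m} ⊗ ℂ^N the permutation unitary Pg by Pg(e_a ⊗ y ⊗ e_k) = e_{a ⊕ g(k)} ⊗ y ⊗ e_k, where ⊕ is bitwise XOR of t-bit strings, and the select unitary Sel = ∑_{j=0}^{G−1} |j⟩⟨j| ⊗ V_j. Then the compression of Pg† · Sel · Pg onto the joint zero state of the first two registers is diag(d_{g(0),0}, d_{g(1),1}, …, d_{g(N−1),N−1}); that is, (⟨0|_G ⊗ ⟨0|^{⊗m} ⊗ I_N)·Pg†·Sel·Pg·(|0⟩_G ⊗ |0⟩^{⊗m} ⊗ I_N) = diag over k of d_{g(k),k}. In particular, if d_{j,k} = f_j(x_k) for functions f_j and points x_k,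 this yields a block-encoding of the diagonal matrix of the piece-wise function k ↦ f_{g(k)}(x_k). -/

import Mathlib

namespace PieceWise

open Matrix

/-- The select operator `Sel = ∑_{j=0}^{G−1} |j⟩⟨j| ⊗ V_j` on
`ℂ^G ⊗ ℂ^{2^m} ⊗ ℂ^N`. -/
def Sel (G m N : ℕ)
    (V : Fin G → Matrix (Fin (2 ^ m) × Fin N) (Fin (2 ^ m) × Fin N) ℂ) :
    Matrix (Fin G × Fin (2 ^ m) × Fin N) (Fin G × Fin (2 ^ m) × Fin N) ℂ :=
  Matrix.of fun x y => if x.1 = y.1 then V x.1 x.2 y.2 else 0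

/-- The permutation unitary `Pg(e_a ⊗ y ⊗ e_k) = e_{a ⊕ g(k)} ⊗ y ⊗ e_k`,
`⊕` being the bitwise XOR of `t`-bit strings (`G = 2^t`). -/
def Pg (t m N : ℕ) (g : Fin N → Fin (2 ^ t)) :
    Matrix (Fin (2 ^ t) × Fin (2 ^ m) × Fin N)
      (Fin (2 ^ t) × Fin (2 ^ m) × Fin N) ℂ :=
  Matrix.of fun x y =>
    if x.2.1 = y.2.1 ∧ x.2.2 = y.2.2 ∧
        (x.1 : ℕ) = (y.1 : ℕ) ^^^ ((g y.2.2 : ℕ))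
    then 1 else 0

/-- block-encoding of a piece-wise function. If each `V_j`
block-encodes a diagonal matrix `diag(d_{j,0}, …, d_{j,N−1})`, then
`Pg† · Sel · Pg` block-encodes the diagonal matrix whose `k`-th entry is
`d_{g(k),k}`, i.e. the piece-wise function `k ↦ f_{g(k)}(x_k)`. -/
theorem piecewise_block_encoding (m N t : ℕ) (hm : 1 ≤ m) (hN : 1 ≤ N)
    (ht : 1 ≤ t) (g : Fin N → Fin (2 ^ t))
    (V : Fin (2 ^ t) → Matrix (Fin (2 ^ m) × Fin N) (Fin (2 ^ m) × Fin N) ℂ)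
    (hV : ∀ j, V j * (V j)ᴴ = 1 ∧ (V j)ᴴ * V j = 1)
    (d : Fin (2 ^ t) → Fin N → ℂ)
    (hd : ∀ j, ∀ x y : Fin N,
      V j ((0 : Fin (2 ^ m)), x) ((0 : Fin (2 ^ m)), y) =
        if x = y then d j x else 0) :
    ∀ x y : Fin N,
      ((Pg t m N g)ᴴ * Sel (2 ^ t) m N V * Pg t m N g)
          ((0 : Fin (2 ^ t)), ((0 : Fin (2 ^ m)), x))
          ((0 : Fin (2 ^ t)), ((0 : Fin (2 ^ m)), y)) =
        if x = y then d (g x) x else 0 := by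
  intro x y
  have hPg : ∀ z : Fin N, ∀ q : Fin (2 ^ t) × Fin (2 ^ m) × Fin N,
      Pg t m N g q ((0 : Fin (2 ^ t)), ((0 : Fin (2 ^ m)), z)) =
        if q = (g z, ((0 : Fin (2 ^ m)), z)) then 1 else 0 := by
    intro z q
    simp only [Pg, Matrix.of_apply, Fin.val_zero, Nat.zero_xor]
    congr 1
    rw [eq_iff_iff]
    constructor
    · rintro ⟨h1, h2, h3⟩
      obtain ⟨a, b, c⟩ := q
      simp only at h1 h2 h3
      subst h1 h2
      simp only [Prod.mk.injEq, and_true]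
      exact Fin.ext (by simpa using h3)
    · rintro rfl
      exact ⟨rfl, rfl, rfl⟩
  rw [Matrix.mul_apply]
  rw [Finset.sum_eq_single ((g y, ((0 : Fin (2 ^ m)), y)))]
  · rw [hPg, if_pos rfl, mul_one, Matrix.mul_apply]
    rw [Finset.sum_eq_single ((g x, ((0 : Fin (2 ^ m)), x)))]
    · rw [Matrix.conjTranspose_apply, hPg, if_pos rfl, star_one, one_mul]
      simp only [Sel, Matrix.of_apply, hd]
      by_cases h : x = y
      · subst h; simp
      · simp only [if_neg h]
        split <;> simp [h]
    · intro b _ hb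
      rw [Matrix.conjTranspose_apply, hPg, if_neg hb, star_zero, zero_mul]
    · intro h; exact absurd (Finset.mem_univ _) h
  · intro b _ hb
    rw [hPg, if_neg hb, mul_zero]
  · intro h; exact absurd (Finset.mem_univ _) h

end PieceWise
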